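/- At λ = 2√ν, the value ∂W/∂y(−1,ν,2√ν) equals 2ν(1−√ν)³(1 + 5√ν + 12ν + 24ν^{3/2} + 15ν² + 7ν^{5/2}), and this is strictly positive for all 0 < ν < 1. -/
import Mathlib


noncomputable def Wy (v l y : ℝ) : ℝ :=
  2*v*(2*v^3*l^2*y^3 + 3*v*l*(v^2 + l^2 - 1)*y^2
    + (l^4 - v^4 - 1 + 2*v*(v + l^2))*y + l*(1 + l^2 - v^2))

theorem stmt11 (v : ℝ) (hv0 : 0 < v) (hv1 : v < 1) :
    Wy v (2*Real.sqrt v) (-1)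
      = 2*v*(1 - Real.sqrt v)^3 *
        (1 + 5*Real.sqrt v + 12*v + 24*v*Real.sqrt v + 15*v^2 + 7*v^2*Real.sqrt v) ∧
    0 < Wy v (2*Real.sqrt v) (-1) := by
  set s := Real.sqrt v with hs
  have hs2 : s^2 = v := Real.sq_sqrt hv0.le
  have hspos : 0 < s := Real.sqrt_pos.mpr hv0
  have hs1 : s < 1 := by
    rw [hs, show (1:ℝ) = Real.sqrt 1 by simp]; exact Real.sqrt_lt_sqrt hv0.le hv1
  have heq : Wy v (2*s) (-1)
      = 2*v*(1 - s)^3 * (1 + 5*s + 12*v + 24*v*s + 15*v^2 + 7*v^2*s) := by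
    rw [Wy, ← hs2]; ring
  refine ⟨heq, ?_⟩
  rw [heq]
  have h1 : 0 < (1 - s)^3 := by exact pow_pos (by linarith) 3
  have h2 : 0 < 1 + 5*s + 12*v + 24*v*s + 15*v^2 + 7*v^2*s := by positivity
  have := mul_pos (mul_pos (by linarith : (0:ℝ) < 2*v) h1) h2
  linarith
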